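/- Let e_α := (−sin α, cos α), J(x,y) = (−y,x), let p : ℝ → ℝ be a C³ function with p(α + π) = p(α) for all α, and define γ(α) := p'(α)e_α − p(α)Je_α, q(α) := (p''(α) + p(α))², A := (1/2)∫₀^{2π} p(α)(p''(α)+p(α)) dα, and F(α₁,α₂) := [ω(γ''(α₁),γ(α₂)) + 2ω(γ'(α₁),γ'(α₂)) + ω(γ(α₁),γ''(α₂))] · ω(γ'(α₁),γ'(α₂)). Then 4∬_{[0,π]²} F(α₁,α₂) dα₁dα₂ = −2A∫₀^{2π} q(α) dα + (∫₀^{2π} q(α) dα)² − (∫₀^{2π} q(α)cos(2α) dα)² − (∫₀^{2π} q(α)sin(2α) dα)². -/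

import Mathlib

open Real

/-- The standard area form (determinant) on `ℝ²`. -/
def omega2 (u v : ℝ × ℝ) : ℝ := u.1 * v.2 - u.2 * v.1

/-- The unit vector forming an angle `α` with the vertical direction `(0,1)`. -/
noncomputable def eVec (α : ℝ) : ℝ × ℝ := (-Real.sin α, Real.cos α)

/-- Rotation by `π/2` in the positive direction. -/
def Jrot (v : ℝ × ℝ) : ℝ × ℝ := (-v.2, v.1)

namespace SympBilliard

open intervalIntegral MeasureTheory

lemma hda {f : ℝ → ℝ} {v w x : ℝ} (h : HasDerivAt f v x) (e : v = w) : HasDerivAt f w x :=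
  e ▸ h

lemma ibp0 (g H : ℝ → ℝ) (hH : ∀ x, HasDerivAt H (g x) x) (hg : Continuous g)
    (hHper : H π = H 0) : (∫ x in (0:ℝ)..π, g x) = 0 := by
  rw [integral_eq_sub_of_hasDerivAt (fun x _ => hH x) (hg.intervalIntegrable 0 π), hHper,
    sub_self]

lemma halfint (g : ℝ → ℝ) (hg : Continuous g) (hgp : ∀ x, g (x + π) = g x) :
    (∫ x in (0:ℝ)..(2*π), g x) = 2 * ∫ x in (0:ℝ)..π, g x := by
  have h1 : (∫ x in (0:ℝ)..π, g x) + (∫ x in π..(2*π), g x) = ∫ x in (0:ℝ)..(2*π), g x :=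
    integral_add_adjacent_intervals (hg.intervalIntegrable _ _) (hg.intervalIntegrable _ _)
  have h2 : (∫ x in π..(2*π), g x) = ∫ x in (0:ℝ)..π, g x := by
    calc (∫ x in π..(2*π), g x) = ∫ x in (0+π)..(π+π), g x := by norm_num [two_mul]
    _ = ∫ x in (0:ℝ)..π, g (x + π) := (integral_comp_add_right g π).symm
    _ = ∫ x in (0:ℝ)..π, g x := integral_congr fun x _ => hgp x
  linarith

lemma conv_ss (f g : ℝ → ℝ) (hf : Continuous f) (hg : Continuous g) :
    (∫ x in (0:ℝ)..π, (f x * g x) * (Real.sin x * Real.sin x)) =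
      (1/2) * (∫ x in (0:ℝ)..π, f x * g x)
        - (1/2) * (∫ x in (0:ℝ)..π, (f x * g x) * Real.cos (2*x)) := by
  have h1 : ∀ x:ℝ, (f x * g x) * (Real.sin x * Real.sin x)
      = (1/2) * (f x * g x) - (1/2) * ((f x * g x) * Real.cos (2*x)) := by
    intro x
    have hc := Real.cos_two_mul x
    have hs := Real.sin_sq_add_cos_sq x
    linear_combination ((1/2) * (f x * g x)) * hc + (f x * g x) * hs
  rw [integral_congr (fun x _ => h1 x),
    integral_sub ((show Continuous fun x => (1/2:ℝ) * (f x * g x) from continuous_const.mul (hf.mul hg)).intervalIntegrable 0 π)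
      ((show Continuous fun x => (1/2:ℝ) * ((f x * g x) * Real.cos (2*x)) from continuous_const.mul ((hf.mul hg).mul (by fun_prop))).intervalIntegrable 0 π),
    intervalIntegral.integral_const_mul, intervalIntegral.integral_const_mul]

lemma conv_cc (f g : ℝ → ℝ) (hf : Continuous f) (hg : Continuous g) :
    (∫ x in (0:ℝ)..π, (f x * g x) * (Real.cos x * Real.cos x)) =
      (1/2) * (∫ x in (0:ℝ)..π, f x * g x)
        + (1/2) * (∫ x in (0:ℝ)..π, (f x * g x) * Real.cos (2*x)) := by
  have h1 : ∀ x:ℝ, (f x * g x) * (Real.cos x * Real.cos x)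
      = (1/2) * (f x * g x) + (1/2) * ((f x * g x) * Real.cos (2*x)) := by
    intro x
    have hc := Real.cos_two_mul x
    linear_combination (-(1/2) * (f x * g x)) * hc
  rw [integral_congr (fun x _ => h1 x),
    integral_add ((show Continuous fun x => (1/2:ℝ) * (f x * g x) from continuous_const.mul (hf.mul hg)).intervalIntegrable 0 π)
      ((show Continuous fun x => (1/2:ℝ) * ((f x * g x) * Real.cos (2*x)) from continuous_const.mul ((hf.mul hg).mul (by fun_prop))).intervalIntegrable 0 π),
    intervalIntegral.integral_const_mul, intervalIntegral.integral_const_mul]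

lemma conv_sc (f g : ℝ → ℝ) (hf : Continuous f) (hg : Continuous g) :
    (∫ x in (0:ℝ)..π, (f x * g x) * (Real.sin x * Real.cos x)) =
      (1/2) * (∫ x in (0:ℝ)..π, (f x * g x) * Real.sin (2*x)) := by
  have h1 : ∀ x:ℝ, (f x * g x) * (Real.sin x * Real.cos x)
      = (1/2) * ((f x * g x) * Real.sin (2*x)) := by
    intro x
    have hc := Real.sin_two_mul x
    linear_combination (-(1/2) * (f x * g x)) * hc
  rw [integral_congr (fun x _ => h1 x), intervalIntegral.integral_const_mul]

lemma int_lin12 (c1 c2 c3 c4 c5 c6 c7 c8 c9 c10 c11 c12 : ℝ) (g1 g2 g3 g4 g5 g6 g7 g8 g9 g10 g11 g12 : ℝ → ℝ)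
    (h1 : Continuous g1)
    (h2 : Continuous g2)
    (h3 : Continuous g3)
    (h4 : Continuous g4)
    (h5 : Continuous g5)
    (h6 : Continuous g6)
    (h7 : Continuous g7)
    (h8 : Continuous g8)
    (h9 : Continuous g9)
    (h10 : Continuous g10)
    (h11 : Continuous g11)
    (h12 : Continuous g12) :
    (∫ x in (0:ℝ)..π, (c1 * g1 x + c2 * g2 x + c3 * g3 x + c4 * g4 x + c5 * g5 x + c6 * g6 x + c7 * g7 x + c8 * g8 x + c9 * g9 x + c10 * g10 x + c11 * g11 x + c12 * g12 x)) = c1 * (∫ x in (0:ℝ)..π, g1 x) + c2 * (∫ x in (0:ℝ)..π, g2 x) + c3 * (∫ x in (0:ℝ)..π, g3 x) + c4 * (∫ x in (0:ℝ)..π, g4 x) + c5 * (∫ x in (0:ℝ)..π, g5 x) + c6 * (∫ x in (0:ℝ)..π, g6 x) + c7 * (∫ x in (0:ℝ)..π, g7 x) + c8 * (∫ x in (0:ℝ)..π, g8 x) + c9 * (∫ x in (0:ℝ)..π, g9 x) + c10 * (∫ x in (0:ℝ)..π, g10 x) + c11 * (∫ x in (0:ℝ)..π, g11 x) + c12 *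 (∫ x in (0:ℝ)..π, g12 x) := by
  have i1 : IntervalIntegrable (fun x => c1 * g1 x) volume 0 π := (continuous_const.mul h1).intervalIntegrable 0 π
  have i2 : IntervalIntegrable (fun x => c1 * g1 x + c2 * g2 x) volume 0 π := i1.add ((continuous_const.mul h2).intervalIntegrable 0 π)
  have i3 : IntervalIntegrable (fun x => c1 * g1 x + c2 * g2 x + c3 * g3 x) volume 0 π := i2.add ((continuous_const.mul h3).intervalIntegrable 0 π)
  have i4 : IntervalIntegrable (fun x => c1 * g1 x + c2 * g2 x + c3 * g3 x + c4 * g4 x) volume 0 π := i3.add ((continuous_const.mul h4).intervalIntegrable 0 π)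
  have i5 : IntervalIntegrable (fun x => c1 * g1 x + c2 * g2 x + c3 * g3 x + c4 * g4 x + c5 * g5 x) volume 0 π := i4.add ((continuous_const.mul h5).intervalIntegrable 0 π)
  have i6 : IntervalIntegrable (fun x => c1 * g1 x + c2 * g2 x + c3 * g3 x + c4 * g4 x + c5 * g5 x + c6 * g6 x) volume 0 π := i5.add ((continuous_const.mul h6).intervalIntegrable 0 π)
  have i7 : IntervalIntegrable (fun x => c1 * g1 x + c2 * g2 x + c3 * g3 x + c4 * g4 x + c5 * g5 x + c6 * g6 x + c7 * g7 x) volume 0 π := i6.add ((continuous_const.mul h7).intervalIntegrable 0 π)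
  have i8 : IntervalIntegrable (fun x => c1 * g1 x + c2 * g2 x + c3 * g3 x + c4 * g4 x + c5 * g5 x + c6 * g6 x + c7 * g7 x + c8 * g8 x) volume 0 π := i7.add ((continuous_const.mul h8).intervalIntegrable 0 π)
  have i9 : IntervalIntegrable (fun x => c1 * g1 x + c2 * g2 x + c3 * g3 x + c4 * g4 x + c5 * g5 x + c6 * g6 x + c7 * g7 x + c8 * g8 x + c9 * g9 x) volume 0 π := i8.add ((continuous_const.mul h9).intervalIntegrable 0 π)
  have i10 : IntervalIntegrable (fun x => c1 * g1 x + c2 * g2 x + c3 * g3 x + c4 * g4 x + c5 * g5 x + c6 * g6 x + c7 * g7 x + c8 * g8 x + c9 * g9 x + c10 * g10 x) volume 0 π := i9.add ((continuous_const.mul h10).intervalIntegrable 0 π)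
  have i11 : IntervalIntegrable (fun x => c1 * g1 x + c2 * g2 x + c3 * g3 x + c4 * g4 x + c5 * g5 x + c6 * g6 x + c7 * g7 x + c8 * g8 x + c9 * g9 x + c10 * g10 x + c11 * g11 x) volume 0 π := i10.add ((continuous_const.mul h11).intervalIntegrable 0 π)
  have i12 : IntervalIntegrable (fun x => c1 * g1 x + c2 * g2 x + c3 * g3 x + c4 * g4 x + c5 * g5 x + c6 * g6 x + c7 * g7 x + c8 * g8 x + c9 * g9 x + c10 * g10 x + c11 * g11 x + c12 * g12 x) volume 0 π := i11.add ((continuous_const.mul h12).intervalIntegrable 0 π)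
  rw [integral_add i11 ((show Continuous fun x => c12 * g12 x from continuous_const.mul h12).intervalIntegrable 0 π), integral_add i10 ((show Continuous fun x => c11 * g11 x from continuous_const.mul h11).intervalIntegrable 0 π), integral_add i9 ((show Continuous fun x => c10 * g10 x from continuous_const.mul h10).intervalIntegrable 0 π), integral_add i8 ((show Continuous fun x => c9 * g9 x from continuous_const.mul h9).intervalIntegrable 0 π), integral_add i7 ((show Continuous fun x => c8 * g8 x from continuous_const.mul h8).intervalIntegrable 0 π), integral_add i6 ((show Continuous fun x => c7 * g7 x from continuous_const.mul h7).intervalIntegrable 0 π), integral_add i5 ((show Continuous fun x => c6 * g6 x from continuous_const.mul h6).intervalIntegrable 0 π), integral_add i4 ((show Continuous fun x => c5 * g5 x from continuous_const.mul h5).intervalIntegrable 0 π), integral_add i3 ((show Continuous fun x => c4 * g4 x from continuous_const.mul h4).intervalIntegrable 0 π), integral_add i2 ((show Continuous fun x => c3 * g3 x from continuous_const.mul h3).intervalIntegrable 0 π), integral_add i1 ((show Continuous fun x => c2 * g2 x from continuous_const.mul h2).intervalIntegrable 0 π)]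
  simp only [intervalIntegral.integral_const_mul]

lemma key (p p1 p2 p3 r s q : ℝ → ℝ) (A : ℝ) (γ : ℝ → ℝ × ℝ) (F : ℝ → ℝ → ℝ)
    (hP : ∀ x, HasDerivAt p (p1 x) x)
    (hP1 : ∀ x, HasDerivAt p1 (p2 x) x)
    (hP2 : ∀ x, HasDerivAt p2 (p3 x) x)
    (hcp : Continuous p) (hcp1 : Continuous p1) (hcp2 : Continuous p2) (hcp3 : Continuous p3)
    (hre : ∀ x, r x = p2 x + p x) (hse : ∀ x, s x = p3 x + p1 x)
    (hperp : ∀ x, p (x + π) = p x) (hper1 : ∀ x, p1 (x + π) = p1 x)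
    (hper2 : ∀ x, p2 (x + π) = p2 x)
    (hγe : γ = fun α => (-(p1 α * Real.sin α) + p α * Real.cos α,
      p1 α * Real.cos α + p α * Real.sin α))
    (hq : ∀ α, q α = r α * r α)
    (hA : A = (1/2) * ∫ x in (0:ℝ)..(2*π), p x * r x)
    (hF : ∀ a b, F a b = (omega2 (deriv (deriv γ) a) (γ b)
        + 2 * omega2 (deriv γ a) (deriv γ b)
        + omega2 (γ a) (deriv (deriv γ) b)) * omega2 (deriv γ a) (deriv γ b)) :
    4 * (∫ a in (0:ℝ)..π, ∫ b in (0:ℝ)..π, F a b) =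
      -2 * A * (∫ α in (0:ℝ)..(2 * π), q α) +
      (∫ α in (0:ℝ)..(2 * π), q α) ^ 2 -
      (∫ α in (0:ℝ)..(2 * π), q α * Real.cos (2 * α)) ^ 2 -
      (∫ α in (0:ℝ)..(2 * π), q α * Real.sin (2 * α)) ^ 2 := by
  -- basic continuity
  have hcr : Continuous r := by
    have : r = fun x => p2 x + p x := funext hre
    rw [this]; exact hcp2.add hcp
  have hcs : Continuous s := by
    have : s = fun x => p3 x + p1 x := funext hse
    rw [this]; exact hcp3.add hcp1
  have hdr : ∀ x, HasDerivAt r (s x) x := by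
    intro x
    have h1 : r = fun y => p2 y + p y := funext hre
    rw [h1, hse x]
    exact (hP2 x).add (hP x)
  -- periodicity helpers
  have hrper : ∀ x, r (x + π) = r x := by
    intro x; rw [hre, hre, hper2, hperp]
  have hppi : p π = p 0 := by simpa using hperp 0
  have hp1pi : p1 π = p1 0 := by simpa using hper1 0
  have hrpi : r π = r 0 := by simpa using hrper 0
  -- derivative helpers for double angle
  have hdc2 : ∀ x:ℝ, HasDerivAt (fun y => Real.cos (2*y)) (-(2 * Real.sin (2*x))) x := by
    intro x
    have h : HasDerivAt (fun y:ℝ => 2*y) 2 x := by simpa using (hasDerivAt_id x).const_mul 2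
    exact hda ((Real.hasDerivAt_cos (2*x)).comp x h) (by ring)
  have hds2 : ∀ x:ℝ, HasDerivAt (fun y => Real.sin (2*y)) (2 * Real.cos (2*x)) x := by
    intro x
    have h : HasDerivAt (fun y:ℝ => 2*y) 2 x := by simpa using (hasDerivAt_id x).const_mul 2
    exact hda ((Real.hasDerivAt_sin (2*x)).comp x h) (by ring)
  -- derivatives of γ
  have hγ1 : deriv γ = fun a => (-((p2 a + p a) * Real.sin a), (p2 a + p a) * Real.cos a) := by
    funext α
    have hA1 : HasDerivAt (fun α => -(p1 α * Real.sin α) + p α * Real.cos α)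
        (-((p2 α + p α) * Real.sin α)) α :=
      hda ((((hP1 α).mul (Real.hasDerivAt_sin α)).neg).add
        ((hP α).mul (Real.hasDerivAt_cos α))) (by ring)
    have hB1 : HasDerivAt (fun α => p1 α * Real.cos α + p α * Real.sin α)
        ((p2 α + p α) * Real.cos α) α :=
      hda (((hP1 α).mul (Real.hasDerivAt_cos α)).add
        ((hP α).mul (Real.hasDerivAt_sin α))) (by ring)
    rw [hγe]
    exact (hA1.prodMk hB1).deriv
  have hγ2 : deriv (deriv γ) = fun a =>
      (-((p3 a + p1 a) * Real.sin a) - (p2 a + p a) * Real.cos a,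
        (p3 a + p1 a) * Real.cos a - (p2 a + p a) * Real.sin a) := by
    funext α
    have hA1 : HasDerivAt (fun a => -((p2 a + p a) * Real.sin a))
        (-((p3 α + p1 α) * Real.sin α) - (p2 α + p α) * Real.cos α) α :=
      hda ((((hP2 α).add (hP α)).mul (Real.hasDerivAt_sin α)).neg) (by simp only [Pi.add_apply]; ring)
    have hB1 : HasDerivAt (fun a => (p2 a + p a) * Real.cos a)
        ((p3 α + p1 α) * Real.cos α - (p2 α + p α) * Real.sin α) α :=
      hda (((hP2 α).add (hP α)).mul (Real.hasDerivAt_cos α)) (by simp only [Pi.add_apply]; ring)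
    rw [hγ1]
    exact (hA1.prodMk hB1).deriv
  -- integration by parts relations
  have hAS : (∫ x in (0:ℝ)..π, s x * r x) = 0 := by
    refine ibp0 _ (fun x => r x * r x / 2) (fun x => ?_) (hcs.mul hcr) (by simp only [hrpi])
    exact hda (((hdr x).mul (hdr x)).div_const 2) (by ring)
  have hAP1 : (∫ x in (0:ℝ)..π, p1 x * r x) = 0 := by
    refine ibp0 _ (fun x => (p1 x * p1 x + p x * p x) / 2) (fun x => ?_)
      (hcp1.mul hcr) (by simp only [hppi, hp1pi])
    exact hda ((((hP1 x).mul (hP1 x)).add ((hP x).mul (hP x))).div_const 2)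
      (by rw [hre x]; ring)
  have hCS : (∫ x in (0:ℝ)..π, (s x * r x) * Real.cos (2*x))
      = ∫ x in (0:ℝ)..π, (r x * r x) * Real.sin (2*x) := by
    have h0 : (∫ x in (0:ℝ)..π,
        ((s x * r x) * Real.cos (2*x) - (r x * r x) * Real.sin (2*x))) = 0 := by
      refine ibp0 _ (fun x => (r x * r x) * Real.cos (2*x) / 2) (fun x => ?_)
        (by fun_prop) (by norm_num [hrpi])
      exact hda ((((hdr x).mul (hdr x)).mul (hdc2 x)).div_const 2) (by simp only [Pi.mul_apply]; ring)
    rw [integral_sub ((by fun_prop : Continuous fun x:ℝ => (s x * r x) * Real.cos (2*x)).intervalIntegrable 0 π)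
      ((by fun_prop : Continuous fun x:ℝ => (r x * r x) * Real.sin (2*x)).intervalIntegrable 0 π)] at h0
    exact sub_eq_zero.mp h0
  have hSS : (∫ x in (0:ℝ)..π, (s x * r x) * Real.sin (2*x))
      = -(∫ x in (0:ℝ)..π, (r x * r x) * Real.cos (2*x)) := by
    have h0 : (∫ x in (0:ℝ)..π,
        ((s x * r x) * Real.sin (2*x) + (r x * r x) * Real.cos (2*x))) = 0 := by
      refine ibp0 _ (fun x => (r x * r x) * Real.sin (2*x) / 2) (fun x => ?_)
        (by fun_prop) (by norm_num [Real.sin_two_pi])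
      exact hda ((((hdr x).mul (hdr x)).mul (hds2 x)).div_const 2) (by simp only [Pi.mul_apply]; ring)
    rw [integral_add ((by fun_prop : Continuous fun x:ℝ => (s x * r x) * Real.sin (2*x)).intervalIntegrable 0 π)
      ((by fun_prop : Continuous fun x:ℝ => (r x * r x) * Real.cos (2*x)).intervalIntegrable 0 π)] at h0
    linarith
  have hCP : (∫ x in (0:ℝ)..π, (p x * r x) * Real.cos (2*x))
      = ∫ x in (0:ℝ)..π, (p1 x * r x) * Real.sin (2*x) := by
    have h0 : (∫ x in (0:ℝ)..π,
        ((p x * r x) * Real.cos (2*x) - (p1 x * r x) * Real.sin (2*x))) = 0 := by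
      refine ibp0 _ (fun x => p x * p1 x * Real.cos (2*x)
        + (p x * p x - p1 x * p1 x) * Real.sin (2*x) / 2) (fun x => ?_)
        (by fun_prop) (by norm_num [hppi, hp1pi, Real.cos_two_pi, Real.sin_two_pi])
      exact hda ((((hP x).mul (hP1 x)).mul (hdc2 x)).add
        (((((hP x).mul (hP x)).sub ((hP1 x).mul (hP1 x))).mul (hds2 x)).div_const 2))
        (by rw [hre x]; simp only [Pi.mul_apply, Pi.sub_apply]; ring)
    rw [integral_sub ((by fun_prop : Continuous fun x:ℝ => (p x * r x) * Real.cos (2*x)).intervalIntegrable 0 π)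
      ((by fun_prop : Continuous fun x:ℝ => (p1 x * r x) * Real.sin (2*x)).intervalIntegrable 0 π)] at h0
    exact sub_eq_zero.mp h0
  have hSP : (∫ x in (0:ℝ)..π, (p x * r x) * Real.sin (2*x))
      = -(∫ x in (0:ℝ)..π, (p1 x * r x) * Real.cos (2*x)) := by
    have h0 : (∫ x in (0:ℝ)..π,
        ((p x * r x) * Real.sin (2*x) + (p1 x * r x) * Real.cos (2*x))) = 0 := by
      refine ibp0 _ (fun x => p x * p1 x * Real.sin (2*x)
        + (p1 x * p1 x - p x * p x) * Real.cos (2*x) / 2) (fun x => ?_)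
        (by fun_prop) (by norm_num [hppi, hp1pi, Real.cos_two_pi, Real.sin_two_pi])
      exact hda ((((hP x).mul (hP1 x)).mul (hds2 x)).add
        (((((hP1 x).mul (hP1 x)).sub ((hP x).mul (hP x))).mul (hdc2 x)).div_const 2))
        (by rw [hre x]; simp only [Pi.mul_apply, Pi.sub_apply]; ring)
    rw [integral_add ((by fun_prop : Continuous fun x:ℝ => (p x * r x) * Real.sin (2*x)).intervalIntegrable 0 π)
      ((by fun_prop : Continuous fun x:ℝ => (p1 x * r x) * Real.cos (2*x)).intervalIntegrable 0 π)] at h0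
    linarith
  -- the right-hand side integrals
  have hq1 : ∀ α:ℝ, q α * Real.cos (2*α) = (r α * r α) * Real.cos (2*α) := fun α => by rw [hq α]
  have hq2 : ∀ α:ℝ, q α * Real.sin (2*α) = (r α * r α) * Real.sin (2*α) := fun α => by rw [hq α]
  have hQ : (∫ α in (0:ℝ)..(2*π), q α) = 2 * ∫ x in (0:ℝ)..π, r x * r x := by
    rw [integral_congr (g := fun α : ℝ => r α * r α) (fun α _ => hq α)]
    exact halfint _ (hcr.mul hcr) (fun x => by rw [hrper])
  have hQc : (∫ α in (0:ℝ)..(2*π), q α * Real.cos (2*α))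
      = 2 * ∫ x in (0:ℝ)..π, (r x * r x) * Real.cos (2*x) := by
    rw [integral_congr (g := fun α : ℝ => (r α * r α) * Real.cos (2*α)) (fun α _ => hq1 α)]
    refine halfint _ (by fun_prop) (fun x => ?_)
    rw [hrper, show 2*(x+π) = 2*x + 2*π by ring, Real.cos_add_two_pi]
  have hQs : (∫ α in (0:ℝ)..(2*π), q α * Real.sin (2*α))
      = 2 * ∫ x in (0:ℝ)..π, (r x * r x) * Real.sin (2*x) := by
    rw [integral_congr (g := fun α : ℝ => (r α * r α) * Real.sin (2*α)) (fun α _ => hq2 α)]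
    refine halfint _ (by fun_prop) (fun x => ?_)
    rw [hrper, show 2*(x+π) = 2*x + 2*π by ring, Real.sin_add_two_pi]
  have hA2 : A = ∫ x in (0:ℝ)..π, p x * r x := by
    rw [hA, halfint (fun x => p x * r x) (hcp.mul hcr) (fun x => by rw [hperp, hrper])]
    ring

  have hpt : ∀ a b : ℝ, F a b =
      (-(r a * r a) * (Real.cos a * Real.cos a) - (s a * r a) * (Real.sin a * Real.cos a)) * ((p b * r b) * (Real.sin b * Real.sin b)) +
        ((2) * (r a * r a) * (Real.sin a * Real.cos a) + (s a * r a) * (Real.sin a * Real.sin a) - (s a * r a) * (Real.cos a * Real.cos a)) * ((p b * r b) * (Real.sin b * Real.cos b)) +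
        (-(r a * r a) * (Real.sin a * Real.sin a) + (s a * r a) * (Real.sin a * Real.cos a)) * ((p b * r b) * (Real.cos b * Real.cos b)) +
        (-(r a * r a) * (Real.sin a * Real.cos a) + (s a * r a) * (Real.cos a * Real.cos a)) * ((p1 b * r b) * (Real.sin b * Real.sin b)) +
        ((r a * r a) * (Real.sin a * Real.sin a) - (r a * r a) * (Real.cos a * Real.cos a) - (2) * (s a * r a) * (Real.sin a * Real.cos a)) * ((p1 b * r b) * (Real.sin b * Real.cos b)) +
        ((r a * r a) * (Real.sin a * Real.cos a) + (s a * r a) * (Real.sin a * Real.sin a)) * ((p1 b * r b) * (Real.cos b * Real.cos b)) +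
        (-(p a * r a) * (Real.cos a * Real.cos a) + (p1 a * r a) * (Real.sin a * Real.cos a) + (2) * (r a * r a) * (Real.cos a * Real.cos a)) * ((r b * r b) * (Real.sin b * Real.sin b)) +
        ((2) * (p a * r a) * (Real.sin a * Real.cos a) - (p1 a * r a) * (Real.sin a * Real.sin a) + (p1 a * r a) * (Real.cos a * Real.cos a) - (4) * (r a * r a) * (Real.sin a * Real.cos a)) * ((r b * r b) * (Real.sin b * Real.cos b)) +
        (-(p a * r a) * (Real.sin a * Real.sin a) - (p1 a * r a) * (Real.sin a * Real.cos a) + (2) * (r a * r a) * (Real.sin a * Real.sin a)) * ((r b * r b) * (Real.cos b * Real.cos b)) +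
        ((p a * r a) * (Real.sin a * Real.cos a) + (p1 a * r a) * (Real.cos a * Real.cos a)) * ((s b * r b) * (Real.sin b * Real.sin b)) +
        (-(p a * r a) * (Real.sin a * Real.sin a) + (p a * r a) * (Real.cos a * Real.cos a) - (2) * (p1 a * r a) * (Real.sin a * Real.cos a)) * ((s b * r b) * (Real.sin b * Real.cos b)) +
        (-(p a * r a) * (Real.sin a * Real.cos a) + (p1 a * r a) * (Real.sin a * Real.sin a)) * ((s b * r b) * (Real.cos b * Real.cos b)) := by
    intro a b
    rw [hF a b, hγ2, hγ1, hγe]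
    simp only [omega2]
    simp only [hre, hse]
    ring
  have hcv1 : Continuous fun x : ℝ => (p x * r x) * (Real.sin x * Real.sin x) := by fun_prop
  have hcv2 : Continuous fun x : ℝ => (p x * r x) * (Real.sin x * Real.cos x) := by fun_prop
  have hcv3 : Continuous fun x : ℝ => (p x * r x) * (Real.cos x * Real.cos x) := by fun_prop
  have hcv4 : Continuous fun x : ℝ => (p1 x * r x) * (Real.sin x * Real.sin x) := by fun_prop
  have hcv5 : Continuous fun x : ℝ => (p1 x * r x) * (Real.sin x * Real.cos x) := by fun_prop
  have hcv6 : Continuous fun x : ℝ => (p1 x * r x) * (Real.cos x * Real.cos x) := by fun_prop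
  have hcv7 : Continuous fun x : ℝ => (r x * r x) * (Real.sin x * Real.sin x) := by fun_prop
  have hcv8 : Continuous fun x : ℝ => (r x * r x) * (Real.sin x * Real.cos x) := by fun_prop
  have hcv9 : Continuous fun x : ℝ => (r x * r x) * (Real.cos x * Real.cos x) := by fun_prop
  have hcv10 : Continuous fun x : ℝ => (s x * r x) * (Real.sin x * Real.sin x) := by fun_prop
  have hcv11 : Continuous fun x : ℝ => (s x * r x) * (Real.sin x * Real.cos x) := by fun_prop
  have hcv12 : Continuous fun x : ℝ => (s x * r x) * (Real.cos x * Real.cos x) := by fun_prop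
  have hinner : ∀ a : ℝ, (∫ b in (0:ℝ)..π, F a b) =
      (-(r a * r a) * (Real.cos a * Real.cos a) - (s a * r a) * (Real.sin a * Real.cos a)) * (∫ x in (0:ℝ)..π, (p x * r x) * (Real.sin x * Real.sin x)) +
        ((2) * (r a * r a) * (Real.sin a * Real.cos a) + (s a * r a) * (Real.sin a * Real.sin a) - (s a * r a) * (Real.cos a * Real.cos a)) * (∫ x in (0:ℝ)..π, (p x * r x) * (Real.sin x * Real.cos x)) +
        (-(r a * r a) * (Real.sin a * Real.sin a) + (s a * r a) * (Real.sin a * Real.cos a)) * (∫ x in (0:ℝ)..π, (p x * r x) * (Real.cos x * Real.cos x)) +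
        (-(r a * r a) * (Real.sin a * Real.cos a) + (s a * r a) * (Real.cos a * Real.cos a)) * (∫ x in (0:ℝ)..π, (p1 x * r x) * (Real.sin x * Real.sin x)) +
        ((r a * r a) * (Real.sin a * Real.sin a) - (r a * r a) * (Real.cos a * Real.cos a) - (2) * (s a * r a) * (Real.sin a * Real.cos a)) * (∫ x in (0:ℝ)..π, (p1 x * r x) * (Real.sin x * Real.cos x)) +
        ((r a * r a) * (Real.sin a * Real.cos a) + (s a * r a) * (Real.sin a * Real.sin a)) * (∫ x in (0:ℝ)..π, (p1 x * r x) * (Real.cos x * Real.cos x)) +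
        (-(p a * r a) * (Real.cos a * Real.cos a) + (p1 a * r a) * (Real.sin a * Real.cos a) + (2) * (r a * r a) * (Real.cos a * Real.cos a)) * (∫ x in (0:ℝ)..π, (r x * r x) * (Real.sin x * Real.sin x)) +
        ((2) * (p a * r a) * (Real.sin a * Real.cos a) - (p1 a * r a) * (Real.sin a * Real.sin a) + (p1 a * r a) * (Real.cos a * Real.cos a) - (4) * (r a * r a) * (Real.sin a * Real.cos a)) * (∫ x in (0:ℝ)..π, (r x * r x) * (Real.sin x * Real.cos x)) +
        (-(p a * r a) * (Real.sin a * Real.sin a) - (p1 a * r a) * (Real.sin a * Real.cos a) + (2) * (r a * r a) * (Real.sin a * Real.sin a)) * (∫ x in (0:ℝ)..π, (r x * r x) * (Real.cos x * Real.cos x)) +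
        ((p a * r a) * (Real.sin a * Real.cos a) + (p1 a * r a) * (Real.cos a * Real.cos a)) * (∫ x in (0:ℝ)..π, (s x * r x) * (Real.sin x * Real.sin x)) +
        (-(p a * r a) * (Real.sin a * Real.sin a) + (p a * r a) * (Real.cos a * Real.cos a) - (2) * (p1 a * r a) * (Real.sin a * Real.cos a)) * (∫ x in (0:ℝ)..π, (s x * r x) * (Real.sin x * Real.cos x)) +
        (-(p a * r a) * (Real.sin a * Real.cos a) + (p1 a * r a) * (Real.sin a * Real.sin a)) * (∫ x in (0:ℝ)..π, (s x * r x) * (Real.cos x * Real.cos x)) := by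
    intro a
    rw [integral_congr (g := fun b : ℝ =>
      (-(r a * r a) * (Real.cos a * Real.cos a) - (s a * r a) * (Real.sin a * Real.cos a)) * ((p b * r b) * (Real.sin b * Real.sin b)) +
        ((2) * (r a * r a) * (Real.sin a * Real.cos a) + (s a * r a) * (Real.sin a * Real.sin a) - (s a * r a) * (Real.cos a * Real.cos a)) * ((p b * r b) * (Real.sin b * Real.cos b)) +
        (-(r a * r a) * (Real.sin a * Real.sin a) + (s a * r a) * (Real.sin a * Real.cos a)) * ((p b * r b) * (Real.cos b * Real.cos b)) +
        (-(r a * r a) * (Real.sin a * Real.cos a) + (s a * r a) * (Real.cos a * Real.cos a)) * ((p1 b * r b) * (Real.sin b * Real.sin b)) +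
        ((r a * r a) * (Real.sin a * Real.sin a) - (r a * r a) * (Real.cos a * Real.cos a) - (2) * (s a * r a) * (Real.sin a * Real.cos a)) * ((p1 b * r b) * (Real.sin b * Real.cos b)) +
        ((r a * r a) * (Real.sin a * Real.cos a) + (s a * r a) * (Real.sin a * Real.sin a)) * ((p1 b * r b) * (Real.cos b * Real.cos b)) +
        (-(p a * r a) * (Real.cos a * Real.cos a) + (p1 a * r a) * (Real.sin a * Real.cos a) + (2) * (r a * r a) * (Real.cos a * Real.cos a)) * ((r b * r b) * (Real.sin b * Real.sin b)) +
        ((2) * (p a * r a) * (Real.sin a * Real.cos a) - (p1 a * r a) * (Real.sin a * Real.sin a) + (p1 a * r a) * (Real.cos a * Real.cos a) - (4) * (r a * r a) * (Real.sin a * Real.cos a)) * ((r b * r b) * (Real.sin b * Real.cos b)) +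
        (-(p a * r a) * (Real.sin a * Real.sin a) - (p1 a * r a) * (Real.sin a * Real.cos a) + (2) * (r a * r a) * (Real.sin a * Real.sin a)) * ((r b * r b) * (Real.cos b * Real.cos b)) +
        ((p a * r a) * (Real.sin a * Real.cos a) + (p1 a * r a) * (Real.cos a * Real.cos a)) * ((s b * r b) * (Real.sin b * Real.sin b)) +
        (-(p a * r a) * (Real.sin a * Real.sin a) + (p a * r a) * (Real.cos a * Real.cos a) - (2) * (p1 a * r a) * (Real.sin a * Real.cos a)) * ((s b * r b) * (Real.sin b * Real.cos b)) +
        (-(p a * r a) * (Real.sin a * Real.cos a) + (p1 a * r a) * (Real.sin a * Real.sin a)) * ((s b * r b) * (Real.cos b * Real.cos b))) (fun b _ => hpt a b)]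
    exact int_lin12 (-(r a * r a) * (Real.cos a * Real.cos a) - (s a * r a) * (Real.sin a * Real.cos a)) ((2) * (r a * r a) * (Real.sin a * Real.cos a) + (s a * r a) * (Real.sin a * Real.sin a) - (s a * r a) * (Real.cos a * Real.cos a)) (-(r a * r a) * (Real.sin a * Real.sin a) + (s a * r a) * (Real.sin a * Real.cos a)) (-(r a * r a) * (Real.sin a * Real.cos a) + (s a * r a) * (Real.cos a * Real.cos a)) ((r a * r a) * (Real.sin a * Real.sin a) - (r a * r a) * (Real.cos a * Real.cos a) - (2) * (s a * r a) * (Real.sin a * Real.cos a)) ((r a * r a) * (Real.sin a * Real.cos a) + (s a * r a) * (Real.sin a * Real.sin a)) (-(p a * r a) * (Real.cos a * Real.cos a) + (p1 a * r a) * (Real.sin a * Real.cos a) + (2) * (r a * r a) * (Real.cos a * Real.cos a)) ((2) * (p a * r a) * (Real.sin a * Real.cos a) - (p1 a * r a) * (Real.sin a * Real.sin a) + (p1 a * r a) * (Real.cos a * Real.cos a) - (4) * (r a * r a) * (Real.sin a * Real.cos a)) (-(p a * r a) * (Real.sin a * Real.sin a) - (p1 a * r a) * (Real.sin a * Real.cos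 a) + (2) * (r a * r a) * (Real.sin a * Real.sin a)) ((p a * r a) * (Real.sin a * Real.cos a) + (p1 a * r a) * (Real.cos a * Real.cos a)) (-(p a * r a) * (Real.sin a * Real.sin a) + (p a * r a) * (Real.cos a * Real.cos a) - (2) * (p1 a * r a) * (Real.sin a * Real.cos a)) (-(p a * r a) * (Real.sin a * Real.cos a) + (p1 a * r a) * (Real.sin a * Real.sin a))
      (fun x => (p x * r x) * (Real.sin x * Real.sin x)) (fun x => (p x * r x) * (Real.sin x * Real.cos x)) (fun x => (p x * r x) * (Real.cos x * Real.cos x)) (fun x => (p1 x * r x) * (Real.sin x * Real.sin x)) (fun x => (p1 x * r x) * (Real.sin x * Real.cos x)) (fun x => (p1 x * r x) * (Real.cos x * Real.cos x)) (fun x => (r x * r x) * (Real.sin x * Real.sin x)) (fun x => (r x * r x) * (Real.sin x * Real.cos x)) (fun x => (r x * r x) * (Real.cos x * Real.cos x)) (fun x => (s x * r x) * (Real.sin x * Real.sin x)) (fun x => (s x * r x) * (Real.sin x * Real.cos x)) (fun x => (s x * r x) * (Real.cos x * Real.cos x))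
      hcv1 hcv2 hcv3 hcv4 hcv5 hcv6 hcv7 hcv8 hcv9 hcv10 hcv11 hcv12
  have hL : (∫ a in (0:ℝ)..π, ∫ b in (0:ℝ)..π, F a b) =
      (-(∫ x in (0:ℝ)..π, (r x * r x) * (Real.cos x * Real.cos x)) - (∫ x in (0:ℝ)..π, (s x * r x) * (Real.sin x * Real.cos x))) * (∫ x in (0:ℝ)..π, (p x * r x) * (Real.sin x * Real.sin x)) +
        ((2) * (∫ x in (0:ℝ)..π, (r x * r x) * (Real.sin x * Real.cos x)) + (∫ x in (0:ℝ)..π, (s x * r x) * (Real.sin x * Real.sin x)) - (∫ x in (0:ℝ)..π, (s x * r x) * (Real.cos x * Real.cos x))) * (∫ x in (0:ℝ)..π, (p x * r x) * (Real.sin x * Real.cos x)) +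
        (-(∫ x in (0:ℝ)..π, (r x * r x) * (Real.sin x * Real.sin x)) + (∫ x in (0:ℝ)..π, (s x * r x) * (Real.sin x * Real.cos x))) * (∫ x in (0:ℝ)..π, (p x * r x) * (Real.cos x * Real.cos x)) +
        (-(∫ x in (0:ℝ)..π, (r x * r x) * (Real.sin x * Real.cos x)) + (∫ x in (0:ℝ)..π, (s x * r x) * (Real.cos x * Real.cos x))) * (∫ x in (0:ℝ)..π, (p1 x * r x) * (Real.sin x * Real.sin x)) +
        ((∫ x in (0:ℝ)..π, (r x * r x) * (Real.sin x * Real.sin x)) - (∫ x in (0:ℝ)..π, (r x * r x) * (Real.cos x * Real.cos x)) - (2) * (∫ x in (0:ℝ)..π, (s x * r x) * (Real.sin x * Real.cos x))) * (∫ x in (0:ℝ)..π, (p1 x * r x) * (Real.sin x * Real.cos x)) +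
        ((∫ x in (0:ℝ)..π, (r x * r x) * (Real.sin x * Real.cos x)) + (∫ x in (0:ℝ)..π, (s x * r x) * (Real.sin x * Real.sin x))) * (∫ x in (0:ℝ)..π, (p1 x * r x) * (Real.cos x * Real.cos x)) +
        (-(∫ x in (0:ℝ)..π, (p x * r x) * (Real.cos x * Real.cos x)) + (∫ x in (0:ℝ)..π, (p1 x * r x) * (Real.sin x * Real.cos x)) + (2) * (∫ x in (0:ℝ)..π, (r x * r x) * (Real.cos x * Real.cos x))) * (∫ x in (0:ℝ)..π, (r x * r x) * (Real.sin x * Real.sin x)) +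
        ((2) * (∫ x in (0:ℝ)..π, (p x * r x) * (Real.sin x * Real.cos x)) - (∫ x in (0:ℝ)..π, (p1 x * r x) * (Real.sin x * Real.sin x)) + (∫ x in (0:ℝ)..π, (p1 x * r x) * (Real.cos x * Real.cos x)) - (4) * (∫ x in (0:ℝ)..π, (r x * r x) * (Real.sin x * Real.cos x))) * (∫ x in (0:ℝ)..π, (r x * r x) * (Real.sin x * Real.cos x)) +
        (-(∫ x in (0:ℝ)..π, (p x * r x) * (Real.sin x * Real.sin x)) - (∫ x in (0:ℝ)..π, (p1 x * r x) * (Real.sin x * Real.cos x)) + (2) * (∫ x in (0:ℝ)..π, (r x * r x) * (Real.sin x * Real.sin x))) * (∫ x in (0:ℝ)..π, (r x * r x) * (Real.cos x * Real.cos x)) +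
        ((∫ x in (0:ℝ)..π, (p x * r x) * (Real.sin x * Real.cos x)) + (∫ x in (0:ℝ)..π, (p1 x * r x) * (Real.cos x * Real.cos x))) * (∫ x in (0:ℝ)..π, (s x * r x) * (Real.sin x * Real.sin x)) +
        (-(∫ x in (0:ℝ)..π, (p x * r x) * (Real.sin x * Real.sin x)) + (∫ x in (0:ℝ)..π, (p x * r x) * (Real.cos x * Real.cos x)) - (2) * (∫ x in (0:ℝ)..π, (p1 x * r x) * (Real.sin x * Real.cos x))) * (∫ x in (0:ℝ)..π, (s x * r x) * (Real.sin x * Real.cos x)) +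
        (-(∫ x in (0:ℝ)..π, (p x * r x) * (Real.sin x * Real.cos x)) + (∫ x in (0:ℝ)..π, (p1 x * r x) * (Real.sin x * Real.sin x))) * (∫ x in (0:ℝ)..π, (s x * r x) * (Real.cos x * Real.cos x)) := by
    rw [integral_congr (g := fun a : ℝ =>
      (-(∫ x in (0:ℝ)..π, (r x * r x) * (Real.cos x * Real.cos x)) - (∫ x in (0:ℝ)..π, (s x * r x) * (Real.sin x * Real.cos x))) * ((p a * r a) * (Real.sin a * Real.sin a)) +
        ((2) * (∫ x in (0:ℝ)..π, (r x * r x) * (Real.sin x * Real.cos x)) + (∫ x in (0:ℝ)..π, (s x * r x) * (Real.sin x * Real.sin x)) - (∫ x in (0:ℝ)..π, (s x * r x) * (Real.cos x * Real.cos x))) * ((p a * r a) * (Real.sin a * Real.cos a)) +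
        (-(∫ x in (0:ℝ)..π, (r x * r x) * (Real.sin x * Real.sin x)) + (∫ x in (0:ℝ)..π, (s x * r x) * (Real.sin x * Real.cos x))) * ((p a * r a) * (Real.cos a * Real.cos a)) +
        (-(∫ x in (0:ℝ)..π, (r x * r x) * (Real.sin x * Real.cos x)) + (∫ x in (0:ℝ)..π, (s x * r x) * (Real.cos x * Real.cos x))) * ((p1 a * r a) * (Real.sin a * Real.sin a)) +
        ((∫ x in (0:ℝ)..π, (r x * r x) * (Real.sin x * Real.sin x)) - (∫ x in (0:ℝ)..π, (r x * r x) * (Real.cos x * Real.cos x)) - (2) * (∫ x in (0:ℝ)..π, (s x * r x) * (Real.sin x * Real.cos x))) * ((p1 a * r a) * (Real.sin a * Real.cos a)) +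
        ((∫ x in (0:ℝ)..π, (r x * r x) * (Real.sin x * Real.cos x)) + (∫ x in (0:ℝ)..π, (s x * r x) * (Real.sin x * Real.sin x))) * ((p1 a * r a) * (Real.cos a * Real.cos a)) +
        (-(∫ x in (0:ℝ)..π, (p x * r x) * (Real.cos x * Real.cos x)) + (∫ x in (0:ℝ)..π, (p1 x * r x) * (Real.sin x * Real.cos x)) + (2) * (∫ x in (0:ℝ)..π, (r x * r x) * (Real.cos x * Real.cos x))) * ((r a * r a) * (Real.sin a * Real.sin a)) +
        ((2) * (∫ x in (0:ℝ)..π, (p x * r x) * (Real.sin x * Real.cos x)) - (∫ x in (0:ℝ)..π, (p1 x * r x) * (Real.sin x * Real.sin x)) + (∫ x in (0:ℝ)..π, (p1 x * r x) * (Real.cos x * Real.cos x)) - (4) * (∫ x in (0:ℝ)..π, (r x * r x) * (Real.sin x * Real.cos x))) * ((r a * r a) * (Real.sin a * Real.cos a)) +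
        (-(∫ x in (0:ℝ)..π, (p x * r x) * (Real.sin x * Real.sin x)) - (∫ x in (0:ℝ)..π, (p1 x * r x) * (Real.sin x * Real.cos x)) + (2) * (∫ x in (0:ℝ)..π, (r x * r x) * (Real.sin x * Real.sin x))) * ((r a * r a) * (Real.cos a * Real.cos a)) +
        ((∫ x in (0:ℝ)..π, (p x * r x) * (Real.sin x * Real.cos x)) + (∫ x in (0:ℝ)..π, (p1 x * r x) * (Real.cos x * Real.cos x))) * ((s a * r a) * (Real.sin a * Real.sin a)) +
        (-(∫ x in (0:ℝ)..π, (p x * r x) * (Real.sin x * Real.sin x)) + (∫ x in (0:ℝ)..π, (p x * r x) * (Real.cos x * Real.cos x)) - (2) * (∫ x in (0:ℝ)..π, (p1 x * r x) * (Real.sin x * Real.cos x))) * ((s a * r a) * (Real.sin a * Real.cos a)) +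
        (-(∫ x in (0:ℝ)..π, (p x * r x) * (Real.sin x * Real.cos x)) + (∫ x in (0:ℝ)..π, (p1 x * r x) * (Real.sin x * Real.sin x))) * ((s a * r a) * (Real.cos a * Real.cos a))) (fun a _ => by rw [hinner a]; ring)]
    exact int_lin12 (-(∫ x in (0:ℝ)..π, (r x * r x) * (Real.cos x * Real.cos x)) - (∫ x in (0:ℝ)..π, (s x * r x) * (Real.sin x * Real.cos x))) ((2) * (∫ x in (0:ℝ)..π, (r x * r x) * (Real.sin x * Real.cos x)) + (∫ x in (0:ℝ)..π, (s x * r x) * (Real.sin x * Real.sin x)) - (∫ x in (0:ℝ)..π, (s x * r x) * (Real.cos x * Real.cos x))) (-(∫ x in (0:ℝ)..π, (r x * r x) * (Real.sin x * Real.sin x)) + (∫ x in (0:ℝ)..π, (s x * r x) * (Real.sin x * Real.cos x))) (-(∫ x in (0:ℝ)..π, (r x * r x) * (Real.sin x * Real.cos x)) + (∫ x in (0:ℝ)..π, (s x * r x) * (Real.cos x * Real.cos x))) ((∫ x in (0:ℝ)..π, (r x * r x) * (Real.sin x * Real.sin x)) - (∫ x in (0:ℝ)..π, (r x * r x) * (Real.cos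 x * Real.cos x)) - (2) * (∫ x in (0:ℝ)..π, (s x * r x) * (Real.sin x * Real.cos x))) ((∫ x in (0:ℝ)..π, (r x * r x) * (Real.sin x * Real.cos x)) + (∫ x in (0:ℝ)..π, (s x * r x) * (Real.sin x * Real.sin x))) (-(∫ x in (0:ℝ)..π, (p x * r x) * (Real.cos x * Real.cos x)) + (∫ x in (0:ℝ)..π, (p1 x * r x) * (Real.sin x * Real.cos x)) + (2) * (∫ x in (0:ℝ)..π, (r x * r x) * (Real.cos x * Real.cos x))) ((2) * (∫ x in (0:ℝ)..π, (p x * r x) * (Real.sin x * Real.cos x)) - (∫ x in (0:ℝ)..π, (p1 x * r x) * (Real.sin x * Real.sin x)) + (∫ x in (0:ℝ)..π, (p1 x * r x) * (Real.cos x * Real.cos x)) - (4) * (∫ x in (0:ℝ)..π, (r x * r x) * (Real.sin x * Real.cos x))) (-(∫ x in (0:ℝ)..π, (p x * r x) * (Real.sin x * Real.sin x)) - (∫ x in (0:ℝ)..π, (p1 x * r x) * (Real.sin x * Real.cos x)) + (2) * (∫ x in (0:ℝ)..π, (r x * r x) * (Real.sin x * Real.sin x))) ((∫ x in (0:ℝ)..π,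 (p x * r x) * (Real.sin x * Real.cos x)) + (∫ x in (0:ℝ)..π, (p1 x * r x) * (Real.cos x * Real.cos x))) (-(∫ x in (0:ℝ)..π, (p x * r x) * (Real.sin x * Real.sin x)) + (∫ x in (0:ℝ)..π, (p x * r x) * (Real.cos x * Real.cos x)) - (2) * (∫ x in (0:ℝ)..π, (p1 x * r x) * (Real.sin x * Real.cos x))) (-(∫ x in (0:ℝ)..π, (p x * r x) * (Real.sin x * Real.cos x)) + (∫ x in (0:ℝ)..π, (p1 x * r x) * (Real.sin x * Real.sin x)))
      (fun x => (p x * r x) * (Real.sin x * Real.sin x)) (fun x => (p x * r x) * (Real.sin x * Real.cos x)) (fun x => (p x * r x) * (Real.cos x * Real.cos x)) (fun x => (p1 x * r x) * (Real.sin x * Real.sin x)) (fun x => (p1 x * r x) * (Real.sin x * Real.cos x)) (fun x => (p1 x * r x) * (Real.cos x * Real.cos x)) (fun x => (r x * r x) * (Real.sin x * Real.sin x)) (fun x => (r x * r x) * (Real.sin x * Real.cos x)) (fun x => (r x * r x) * (Real.cos x * Real.cos x)) (fun x => (s x * r x) * (Real.sin x * Real.sin x)) (fun x => (s x * r x) *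 (Real.sin x * Real.cos x)) (fun x => (s x * r x) * (Real.cos x * Real.cos x))
      hcv1 hcv2 hcv3 hcv4 hcv5 hcv6 hcv7 hcv8 hcv9 hcv10 hcv11 hcv12
  rw [hQ, hQc, hQs, hA2, hL,
    conv_ss p r hcp hcr, conv_sc p r hcp hcr, conv_cc p r hcp hcr,
    conv_ss p1 r hcp1 hcr, conv_sc p1 r hcp1 hcr, conv_cc p1 r hcp1 hcr,
    conv_ss r r hcr hcr, conv_sc r r hcr hcr, conv_cc r r hcr hcr,
    conv_ss s r hcs hcr, conv_sc s r hcs hcr, conv_cc s r hcs hcr,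
    hAS, hAP1, hCS, hSS, hCP, hSP]
  ring

end SympBilliard

theorem stmt_12 (p : ℝ → ℝ) (hp : ContDiff ℝ 3 p)
    (hper : ∀ α : ℝ, p (α + π) = p α)
    (γ : ℝ → ℝ × ℝ)
    (hγ : ∀ α : ℝ, γ α = deriv p α • eVec α - p α • Jrot (eVec α))
    (q : ℝ → ℝ) (hq : ∀ α : ℝ, q α = (deriv (deriv p) α + p α) ^ 2)
    (A : ℝ)
    (hA : A = (1 / 2) * ∫ α in (0:ℝ)..(2 * π), p α * (deriv (deriv p) α + p α))
    (F : ℝ → ℝ → ℝ)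
    (hF : ∀ α₁ α₂ : ℝ, F α₁ α₂ =
      (omega2 (deriv (deriv γ) α₁) (γ α₂) + 2 * omega2 (deriv γ α₁) (deriv γ α₂)
        + omega2 (γ α₁) (deriv (deriv γ) α₂)) * omega2 (deriv γ α₁) (deriv γ α₂)) :
    4 * (∫ α₁ in (0:ℝ)..π, ∫ α₂ in (0:ℝ)..π, F α₁ α₂) =
      -2 * A * (∫ α in (0:ℝ)..(2 * π), q α) +
      (∫ α in (0:ℝ)..(2 * π), q α) ^ 2 -
      (∫ α in (0:ℝ)..(2 * π), q α * Real.cos (2 * α)) ^ 2 -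
      (∫ α in (0:ℝ)..(2 * π), q α * Real.sin (2 * α)) ^ 2 := by
  have h3 : ContDiff ℝ ((2:ℕ∞)+1) p := hp
  rw [contDiff_succ_iff_deriv] at h3
  have h2 : ContDiff ℝ ((1:ℕ∞)+1) (deriv p) := h3.2.2
  rw [contDiff_succ_iff_deriv] at h2
  have h1 : ContDiff ℝ ((0:ℕ∞)+1) (deriv (deriv p)) := h2.2.2
  rw [contDiff_succ_iff_deriv] at h1
  have hdp : Differentiable ℝ p := h3.1
  have hdp1 : Differentiable ℝ (deriv p) := h2.1
  have hdp2 : Differentiable ℝ (deriv (deriv p)) := h1.1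
  have hcp3 : Continuous (deriv (deriv (deriv p))) := h1.2.2.continuous
  have hper1 : ∀ x, deriv p (x + π) = deriv p x := by
    intro x
    have hfp : (fun y => p (y + π)) = p := funext hper
    conv_lhs => rw [← deriv_comp_add_const p π x, hfp]
  have hper2 : ∀ x, deriv (deriv p) (x + π) = deriv (deriv p) x := by
    intro x
    have hfp : (fun y => deriv p (y + π)) = deriv p := funext hper1
    conv_lhs => rw [← deriv_comp_add_const (deriv p) π x, hfp]
  have hγe : γ = fun α => (-(deriv p α * Real.sin α) + p α * Real.cos α,
      deriv p α * Real.cos α + p α * Real.sin α) := by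
    funext α
    rw [hγ α]
    simp [eVec, Jrot, Prod.ext_iff]
  have hq' : ∀ α, q α = (fun x => deriv (deriv p) x + p x) α * (fun x => deriv (deriv p) x + p x) α := by
    intro α
    rw [hq α]
    show _ = (deriv (deriv p) α + p α) * (deriv (deriv p) α + p α)
    ring
  have hA' : A = (1/2) * ∫ x in (0:ℝ)..(2*π), p x * (fun x => deriv (deriv p) x + p x) x := hA
  exact SympBilliard.key p (deriv p) (deriv (deriv p)) (deriv (deriv (deriv p)))
    (fun x => deriv (deriv p) x + p x) (fun x => deriv (deriv (deriv p)) x + deriv p x)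
    q A γ F
    (fun x => (hdp x).hasDerivAt) (fun x => (hdp1 x).hasDerivAt) (fun x => (hdp2 x).hasDerivAt)
    hdp.continuous hdp1.continuous hdp2.continuous hcp3
    (fun x => rfl) (fun x => rfl)
    hper hper1 hper2
    hγe hq' hA' hF
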